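/- Let f : (0,1) → (0,∞) be a function for which there exists ω : (0,1) → (0,∞) with ω(h) → 0 as h → 0, such that for every finite convex combination (αᵢ)ᵢ₌₁ⁿ ⊆ [0,1] (so Σαᵢ = 1) and every h ∈ (0,1), one has Σᵢ αᵢ f(αᵢ h) ≤ f(h) + ω(h). Then the limit lim_{h↓0} f(h) exists. -/
import Mathlib


open Filter Topology Set

/-- Key inequality: taking `⌊1/t⌋` copies of `t` plus a filler weight in the
convex-combination hypothesis gives `(1-t) f(th) ≤ f(h) + ω(h)`. -/
lemma non_osc_key
    (f ω : ℝ → ℝ)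
    (hf : ∀ h ∈ Set.Ioo (0:ℝ) 1, 0 < f h)
    (hmain : ∀ (n : ℕ) (α : Fin n → ℝ), (∀ i, α i ∈ Set.Icc (0:ℝ) 1) →
      (∑ i, α i) = 1 → ∀ h ∈ Set.Ioo (0:ℝ) 1,
      (∑ i, α i * f (α i * h)) ≤ f h + ω h) :
    ∀ t ∈ Set.Ioo (0:ℝ) 1, ∀ h ∈ Set.Ioo (0:ℝ) 1,
      (1 - t) * f (t * h) ≤ f h + ω h := by
  intro t ht h hh
  obtain ⟨ht0, ht1⟩ := ht
  set m : ℕ := ⌊1/t⌋₊ with hm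
  have honet : (1:ℝ) ≤ 1/t := one_le_one_div ht0 ht1.le
  have hm1 : 1 ≤ m := Nat.le_floor (by exact_mod_cast honet)
  have hmle : (m:ℝ) * t ≤ 1 := by
    have := Nat.floor_le (by positivity : (0:ℝ) ≤ 1/t)
    calc (m:ℝ) * t ≤ (1/t) * t := by
          apply mul_le_mul_of_nonneg_right _ ht0.le
          simpa [hm] using this
      _ = 1 := by field_simp
  have hmgt : 1 - t < (m:ℝ) * t := by
    have h1 : (1:ℝ)/t < m + 1 := Nat.lt_floor_add_one (1/t)
    have := mul_lt_mul_of_pos_right h1 ht0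
    rw [div_mul_cancel₀ _ ht0.ne'] at this
    nlinarith
  set α : Fin (m+1) → ℝ := fun i => if (i:ℕ) < m then t else 1 - m * t with hα
  have hαmem : ∀ i, α i ∈ Set.Icc (0:ℝ) 1 := by
    intro i
    by_cases hi : (i:ℕ) < m <;> simp only [hα, hi, if_true, if_false] <;>
      constructor <;> nlinarith
  have hsum : (∑ i, α i) = 1 := by
    rw [Fin.sum_univ_castSucc]
    have h1 : ∀ i : Fin m, α i.castSucc = t := by
      intro i; simp [hα, i.isLt]
    have h2 : α (Fin.last m) = 1 - m * t := by simp [hα]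
    rw [Finset.sum_congr rfl (fun i _ => h1 i), h2]
    simp only [Finset.sum_const, Finset.card_univ, Fintype.card_fin, nsmul_eq_mul]
    ring
  have hineq := hmain (m+1) α hαmem hsum h hh
  have hLHS : (∑ i, α i * f (α i * h))
      = (m:ℝ) * (t * f (t * h)) + (1 - m * t) * f ((1 - m * t) * h) := by
    rw [Fin.sum_univ_castSucc]
    have h1 : ∀ i : Fin m, α i.castSucc * f (α i.castSucc * h) = t * f (t * h) := by
      intro i; simp [hα, i.isLt]
    have h2 : α (Fin.last m) = 1 - m * t := by simp [hα]
    rw [Finset.sum_congr rfl (fun i _ => h1 i), h2]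
    simp [Finset.sum_const, mul_comm]
  rw [hLHS] at hineq
  have hftpos : 0 < f (t * h) := by
    apply hf
    constructor
    · exact mul_pos ht0 hh.1
    · nlinarith [hh.1, hh.2]
  have htail : 0 ≤ (1 - m * t) * f ((1 - m * t) * h) := by
    rcases eq_or_lt_of_le (by linarith : (0:ℝ) ≤ 1 - m * t) with hz | hz
    · rw [← hz]; simp
    · apply mul_nonneg hz.le
      apply le_of_lt
      apply hf
      constructor
      · exact mul_pos hz hh.1
      · nlinarith [hh.1, hh.2]
  nlinarith [hineq, htail, hftpos, hmgt]

/-- For each fixed `h` and `δ`, the limsup at `0⁺` is bounded by `(f h + ω h)/(1-δ)`. -/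
lemma non_osc_limsup_le
    (f ω : ℝ → ℝ)
    (hf : ∀ h ∈ Set.Ioo (0:ℝ) 1, 0 < f h)
    (hmain : ∀ (n : ℕ) (α : Fin n → ℝ), (∀ i, α i ∈ Set.Icc (0:ℝ) 1) →
      (∑ i, α i) = 1 → ∀ h ∈ Set.Ioo (0:ℝ) 1,
      (∑ i, α i * f (α i * h)) ≤ f h + ω h) :
    ∀ h ∈ Set.Ioo (0:ℝ) 1, ∀ δ ∈ Set.Ioo (0:ℝ) 1,
      Filter.limsup (fun x => (f x : EReal)) (nhdsWithin (0:ℝ) (Set.Ioi 0))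
        ≤ (((f h + ω h) / (1 - δ) : ℝ) : EReal) := by
  intro h hh δ hδ
  refine Filter.limsup_le_of_le (by isBoundedDefault) ?_
  have hmem : Set.Ioo (0:ℝ) (δ * h) ∈ nhdsWithin (0:ℝ) (Set.Ioi 0) :=
    Ioo_mem_nhdsGT_of_mem ⟨le_rfl, mul_pos hδ.1 hh.1⟩
  filter_upwards [hmem] with x hx
  rw [EReal.coe_le_coe_iff]
  have hx0 := hx.1
  have hxh : x < h := by
    calc x < δ * h := hx.2
      _ < 1 * h := by apply mul_lt_mul_of_pos_right hδ.2 hh.1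
      _ = h := one_mul h
  have ht : x / h ∈ Set.Ioo (0:ℝ) 1 := by
    constructor
    · exact div_pos hx0 hh.1
    · exact (div_lt_one hh.1).2 hxh
  have hkey := non_osc_key f ω hf hmain (x/h) ht h hh
  rw [div_mul_cancel₀ _ hh.1.ne'] at hkey
  have hth : x / h < δ := (div_lt_iff₀ hh.1).2 hx.2
  have hfx : 0 < f x := hf x ⟨hx0, hxh.trans hh.2⟩
  rw [le_div_iff₀ (by have := hδ.2; linarith : (0:ℝ) < 1 - δ)]
  nlinarith
theorem non_oscillation_criterion
    (f ω : ℝ → ℝ)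
    (hf : ∀ h ∈ Set.Ioo (0:ℝ) 1, 0 < f h)
    (hω : ∀ h ∈ Set.Ioo (0:ℝ) 1, 0 < ω h)
    (hω0 : Filter.Tendsto ω (nhdsWithin (0:ℝ) (Set.Ioi 0)) (nhds 0))
    (hmain : ∀ (n : ℕ) (α : Fin n → ℝ), (∀ i, α i ∈ Set.Icc (0:ℝ) 1) →
      (∑ i, α i) = 1 → ∀ h ∈ Set.Ioo (0:ℝ) 1,
      (∑ i, α i * f (α i * h)) ≤ f h + ω h) :
    Filter.limsup (fun h => (f h : EReal)) (nhdsWithin (0:ℝ) (Set.Ioi 0))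
      = Filter.liminf (fun h => (f h : EReal)) (nhdsWithin (0:ℝ) (Set.Ioi 0)) := by
  refine le_antisymm ?_ Filter.liminf_le_limsup
  rw [← EReal.le_of_forall_lt_iff_le]
  intro c hc
  -- the liminf is nonnegative
  have hL0 : (0:EReal) ≤ Filter.liminf (fun h => (f h : EReal))
      (nhdsWithin (0:ℝ) (Set.Ioi 0)) := by
    refine Filter.le_liminf_of_le (by isBoundedDefault) ?_
    filter_upwards [Ioo_mem_nhdsGT_of_mem (show (0:ℝ) ∈ Set.Ico 0 1 by simp)] with x hx
    exact_mod_cast (hf x hx).le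
  obtain ⟨q, hq1, hq2⟩ := EReal.exists_between_coe_real hc
  have hq0 : (0:ℝ) < q := by exact_mod_cast hL0.trans_lt hq1
  have hc0 : (0:ℝ) < c := by exact_mod_cast hq0.trans (by exact_mod_cast hq2)
  -- find a point h₀ where f h₀ < q, ω h₀ < c - q
  have hfreq : ∃ᶠ x in nhdsWithin (0:ℝ) (Set.Ioi 0), (f x : EReal) < (q:EReal) :=
    Filter.frequently_lt_of_liminf_lt (by isBoundedDefault) hq1
  have hev1 : ∀ᶠ x in nhdsWithin (0:ℝ) (Set.Ioi 0), x ∈ Set.Ioo (0:ℝ) 1 :=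
    Ioo_mem_nhdsGT_of_mem (show (0:ℝ) ∈ Set.Ico 0 1 by simp)
  have hev2 : ∀ᶠ x in nhdsWithin (0:ℝ) (Set.Ioi 0), ω x < c - q := by
    have : Set.Iio (c - q) ∈ nhds (0:ℝ) := Iio_mem_nhds (by exact_mod_cast sub_pos.2 (by exact_mod_cast hq2))
    exact hω0.eventually this
  obtain ⟨h₀, hfq, hh₀, hωh₀⟩ := (hfreq.and_eventually (hev1.and hev2)).exists
  have hfq' : f h₀ < q := by exact_mod_cast hfq
  set C : ℝ := f h₀ + ω h₀ with hC
  have hC0 : 0 < C := by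
    have := hf h₀ hh₀
    have := hω h₀ hh₀
    positivity
  have hCc : C < c := by
    simp only [hC]; linarith
  set δ : ℝ := 1 - C / c with hδdef
  have hδ : δ ∈ Set.Ioo (0:ℝ) 1 := by
    constructor
    · simp only [hδdef, sub_pos]
      exact (div_lt_one hc0).2 hCc
    · simp only [hδdef, sub_lt_self_iff]
      positivity
  have hbound := non_osc_limsup_le f ω hf hmain h₀ hh₀ δ hδ
  have heq : (f h₀ + ω h₀) / (1 - δ) = c := by
    rw [hδdef, sub_sub_cancel, ← hC]
    rw [div_div_eq_mul_div, mul_comm, mul_div_assoc, div_self hC0.ne', mul_one]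
  rwa [heq] at hbound
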